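/- arXiv:2102.05227 — 3 statements merged into one kernel-verified Lean document; each statement's English description precedes it below -/
import Mathlib

section
/- Let E ∈ ℕ, let 0 < η ≤ 2/E, and let k, l ∈ {0,…,E}. Then for every integer s with 1 ≤ s ≤ E − max(k,l), one has η^s · √(C(s+k,k)·C(s+l,l)) ≤ η·√((k+1)(l+1)). -/
lemma aux_choose_bound (E k : ℕ) : ∀ s : ℕ, 1 ≤ s → s + k ≤ E →
    2 ^ (s - 1) * (s + k).choose k ≤ (k + 1) * E ^ (s - 1) := by
  intro s
  induction s with
  | zero => omega
  | succ s ih =>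
    intro _ hsk
    rcases Nat.eq_zero_or_pos s with rfl | hs
    · have hb : (1 + k).choose k = k + 1 := by
        rw [Nat.add_comm]
        exact Nat.choose_succ_self_right k
      simp [hb]
    · have ih' := ih hs (by omega)
      have key : 2 * (s + 1 + k).choose (s + 1) ≤ E * (s + k).choose s := by
        have hid : (s + k + 1) * (s + k).choose s = (s + k + 1).choose (s + 1) * (s + 1) :=
          Nat.add_one_mul_choose_eq (s + k) s
        have heq : s + 1 + k = s + k + 1 := by omega
        have h1 : 2 * (s + k + 1) ≤ E * (s + 1) := by nlinarith
        have h2 : (2 * (s + 1 + k).choose (s + 1)) * (s + 1) ≤ (E * (s + k).choose s) * (s + 1) := by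
          rw [heq]
          calc 2 * (s + k + 1).choose (s + 1) * (s + 1)
              = 2 * ((s + k + 1) * (s + k).choose s) := by rw [hid]; ring
            _ ≤ E * (s + 1) * (s + k).choose s := by nlinarith
            _ = E * (s + k).choose s * (s + 1) := by ring
        exact Nat.le_of_mul_le_mul_right h2 (by omega)
      have hsym1 : (s + 1 + k).choose k = (s + 1 + k).choose (s + 1) := by
        have h := Nat.choose_symm (show s + 1 ≤ s + 1 + k by omega)
        have : s + 1 + k - (s + 1) = k := by omega
        rw [this] at h
        exact h
      have hsym2 : (s + k).choose k = (s + k).choose s := by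
        have h := Nat.choose_symm (show s ≤ s + k by omega)
        have : s + k - s = k := by omega
        rw [this] at h
        exact h
      have hstep : s + 1 - 1 = (s - 1) + 1 := by omega
      rw [hstep, pow_succ, pow_succ]
      calc 2 ^ (s - 1) * 2 * (s + 1 + k).choose k
          = 2 ^ (s - 1) * (2 * (s + 1 + k).choose (s + 1)) := by rw [hsym1]; ring
        _ ≤ 2 ^ (s - 1) * (E * (s + k).choose s) := Nat.mul_le_mul_left _ key
        _ = (2 ^ (s - 1) * (s + k).choose k) * E := by rw [hsym2]; ring
        _ ≤ (k + 1) * E ^ (s - 1) * E := Nat.mul_le_mul_right _ ih'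
        _ = (k + 1) * (E ^ (s - 1) * E) := by ring

lemma aux_real_bound (E k s : ℕ) (hE : 1 ≤ E) (η : ℝ) (hη : 0 < η)
    (hη2 : η ≤ 2 / E) (hs1 : 1 ≤ s) (hsk : s + k ≤ E) :
    η ^ (s - 1) * ((s + k).choose k : ℝ) ≤ (k : ℝ) + 1 := by
  have hEpos : (0:ℝ) < E := by exact_mod_cast hE
  have hnat := aux_choose_bound E k s hs1 hsk
  have hcast : (2:ℝ) ^ (s - 1) * ((s + k).choose k : ℝ) ≤ ((k:ℝ) + 1) * (E:ℝ) ^ (s - 1) := by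
    exact_mod_cast hnat
  have hηp : η ^ (s - 1) ≤ (2 / E) ^ (s - 1) :=
    pow_le_pow_left₀ hη.le hη2 _
  have hCpos : (0:ℝ) ≤ ((s + k).choose k : ℝ) := Nat.cast_nonneg _
  calc η ^ (s - 1) * ((s + k).choose k : ℝ)
      ≤ (2 / E) ^ (s - 1) * ((s + k).choose k : ℝ) :=
        mul_le_mul_of_nonneg_right hηp hCpos
    _ = (2 ^ (s-1) * ((s + k).choose k : ℝ)) / (E:ℝ) ^ (s-1) := by
        rw [div_pow]; ring
    _ ≤ (((k:ℝ) + 1) * (E:ℝ) ^ (s - 1)) / (E:ℝ) ^ (s-1) := by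
        apply div_le_div_of_nonneg_right hcast (by positivity)
    _ = (k:ℝ) + 1 := by
        field_simp

theorem eta_pow_mul_sqrt_choose_le (E k l s : ℕ) (hE : 1 ≤ E) (η : ℝ)
    (hη : 0 < η) (hη2 : η ≤ 2 / E) (hk : k ≤ E) (hl : l ≤ E)
    (hs1 : 1 ≤ s) (hs2 : s ≤ E - max k l) :
    η ^ s * Real.sqrt (((s + k).choose k : ℝ) * ((s + l).choose l : ℝ)) ≤
      η * Real.sqrt (((k : ℝ) + 1) * ((l : ℝ) + 1)) := by
  have hsk : s + k ≤ E := by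
    have := le_max_left k l; have := le_max_right k l; omega
  have hsl : s + l ≤ E := by
    have := le_max_left k l; have := le_max_right k l; omega
  have hA := aux_real_bound E k s hE η hη hη2 hs1 hsk
  have hB := aux_real_bound E l s hE η hη hη2 hs1 hsl
  have hApos : (0:ℝ) ≤ ((s + k).choose k : ℝ) := Nat.cast_nonneg _
  have hBpos : (0:ℝ) ≤ ((s + l).choose l : ℝ) := Nat.cast_nonneg _
  have hpow : η ^ s = η * η ^ (s - 1) := by
    rw [← pow_succ']; congr 1; omega
  rw [hpow, mul_assoc]
  apply mul_le_mul_of_nonneg_left _ hη.le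
  have hηpos : (0:ℝ) ≤ η ^ (s-1) := by positivity
  have hss : Real.sqrt (η ^ (s-1)) * Real.sqrt (η ^ (s-1)) = η ^ (s-1) :=
    Real.mul_self_sqrt hηpos
  have hkey : η ^ (s-1) * Real.sqrt (((s + k).choose k : ℝ) * ((s + l).choose l : ℝ))
      = Real.sqrt ((η ^ (s-1) * ((s + k).choose k : ℝ)) * (η ^ (s-1) * ((s + l).choose l : ℝ))) := by
    rw [show (η ^ (s-1) * ((s + k).choose k : ℝ)) * (η ^ (s-1) * ((s + l).choose l : ℝ))
          = (η ^ (s-1))^2 * (((s + k).choose k : ℝ) * ((s + l).choose l : ℝ)) by ring,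
        Real.sqrt_mul (sq_nonneg (η ^ (s-1))) (((s + k).choose k : ℝ) * ((s + l).choose l : ℝ)),
        Real.sqrt_sq hηpos]
  rw [hkey]
  apply Real.sqrt_le_sqrt
  apply mul_le_mul hA hB (by positivity) (by positivity)
end

section
/- Let ρ be a positive semidefinite trace-one operator with matrix entries ρ_{mn} (m,n ∈ ℕ) in an orthonormal basis, supported on indices ≤ E. Then for any k, l with 0 ≤ k,l ≤ E and any η with 0 < η ≤ 2/E, Σ_{s=1}^{E−max(k,l)} η^s·√(C(s+k,k)·C(s+l,l))·|ρ_{s+k,s+l}| ≤ η·√((k+1)(l+1)). -/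
open ComplexOrder

lemma psd_diag_nonneg {n : Type*} [Fintype n] [DecidableEq n] {M : Matrix n n ℂ}
    (h : M.PosSemidef) (i : n) : 0 ≤ M i i := by
  exact h.diag_nonneg

lemma psd_abs_entry_le {n : Type*} [Fintype n] [DecidableEq n] {M : Matrix n n ℂ}
    (h : M.PosSemidef) (i j : n) :
    ‖M i j‖ ≤ Real.sqrt ((M i i).re * (M j j).re) := by
  have ha : 0 ≤ (M i i).re := (Complex.le_def.1 (psd_diag_nonneg h i)).1
  have hb : 0 ≤ (M j j).re := (Complex.le_def.1 (psd_diag_nonneg h j)).1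
  by_cases hm : M i j = 0
  · simp [hm, Real.sqrt_nonneg]
  by_cases hij : i = j
  · subst hij
    have h0 := psd_diag_nonneg h i
    have : M i i = ((M i i).re : ℂ) := by
      have := (Complex.le_def.1 h0).2
      exact (Complex.ext_iff.2 ⟨rfl, by simpa using this.symm⟩)
    rw [this]
    simp only [Complex.norm_real, Real.norm_eq_abs, Complex.ofReal_re]
    rw [abs_of_nonneg ha, Real.sqrt_mul_self ha]
  -- main case
  have hji : M j i = starRingEnd ℂ (M i j) := by
    have := h.1
    exact congrFun (congrFun this.symm j) i
  set m : ℂ := M i j with hmdef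
  set am : ℝ := ‖m‖ with hamdef
  have ham : 0 < am := norm_pos_iff.2 hm
  set c : ℂ := -(starRingEnd ℂ m) / am with hcdef
  have hcc : (starRingEnd ℂ c) * c = 1 := by
    rw [hcdef]
    rw [map_div₀, map_neg]
    rw [Complex.conj_conj]
    field_simp
    rw [Complex.mul_conj, Complex.normSq_eq_norm_sq]
    push_cast [← hamdef]
    rw [Complex.conj_ofReal, pow_two, mul_div_assoc, div_self (by exact_mod_cast ham.ne'), mul_one]
  have hmc : m * c = -am := by
    rw [hcdef]
    field_simp
    rw [Complex.mul_conj, Complex.normSq_eq_norm_sq]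
    push_cast [← hamdef]
    ring
  have hcm : (starRingEnd ℂ c) * (starRingEnd ℂ m) = -am := by
    have h2 := congrArg (starRingEnd ℂ) hmc
    rw [map_mul, map_neg, Complex.conj_ofReal] at h2
    rw [mul_comm]
    exact h2
  clear_value c
  have key : ∀ t : ℝ, 0 ≤ (M i i).re * (t * t) + (-(2 * am)) * t + (M j j).re := by
    intro t
    set x : n → ℂ := Pi.single i (t : ℂ) + Pi.single j c with hxdef
    have hq := h.dotProduct_mulVec_nonneg x
    have hx : dotProduct (star x) (M.mulVec x)
        = (t : ℂ) * t * M i i + (t : ℂ) * (m * c) +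
          ((starRingEnd ℂ c) * (starRingEnd ℂ m) * t + (starRingEnd ℂ c) * c * M j j) := by
      rw [hxdef]
      rw [star_add, ← Pi.single_star, ← Pi.single_star]
      simp only [Matrix.mulVec_add, Matrix.mulVec_single, add_dotProduct,
        dotProduct_add, single_dotProduct]
      simp only [Pi.add_apply, Pi.smul_apply, op_smul_eq_mul, Matrix.col_apply, hji, ← hmdef, Complex.star_def, Complex.conj_ofReal]
      ring
    rw [hx] at hq
    have := (Complex.le_def.1 hq).1
    rw [hmc, hcm, hcc] at this
    simp only [Complex.zero_re, Complex.add_re, Complex.mul_re, Complex.mul_im,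
      Complex.ofReal_re, Complex.ofReal_im, Complex.neg_re, Complex.neg_im,
      Complex.one_re, Complex.one_im] at this
    nlinarith [this]
  have hd := discrim_le_zero key
  rw [discrim] at hd
  have hsq : am ^ 2 ≤ (M i i).re * (M j j).re := by nlinarith
  exact (Real.le_sqrt ham.le (by nlinarith)).2 hsq

lemma eta_pow_choose_le {E k : ℕ} {η : ℝ} (hη : 0 < η) (hη2 : η * E ≤ 2) :
    ∀ s : ℕ, 1 ≤ s → s + k ≤ E → η ^ s * (((s + k).choose k : ℕ) : ℝ) ≤ η * (k + 1) := by
  intro s hs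
  induction s, hs using Nat.le_induction with
  | base =>
    intro _
    rw [pow_one]
    have h1 : (1 + k).choose k = k + 1 := by
      rw [add_comm]; exact Nat.choose_succ_self_right k
    rw [h1]; exact le_of_eq (by push_cast; ring)
  | succ s hs ih =>
    intro hsE
    have hskE : s + k ≤ E := by omega
    have ihs := ih hskE
    have hidn : (s + 1 + k).choose k * (s + 1) = (s + k).choose k * (s + k + 1) := by
      have h0 := Nat.add_one_mul_choose_eq (s + k) s
      have h1 : (s + k).choose s = (s + k).choose k := Nat.choose_symm_add
      have h2 : (s + k + 1).choose (s + 1) = (s + 1 + k).choose k := by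
        rw [show s + k + 1 = (s + 1) + k by ring]; exact Nat.choose_symm_add
      rw [h1, h2] at h0
      exact h0.symm.trans (mul_comm _ _)
    have hid : (((s + 1 + k).choose k : ℕ) : ℝ) * (s + 1) =
        (((s + k).choose k : ℕ) : ℝ) * (s + k + 1) := by exact_mod_cast hidn
    have hb : η * ((s : ℝ) + k + 1) ≤ (s : ℝ) + 1 := by
      have hE' : ((s : ℝ) + k + 1) ≤ E := by
        have hn : s + k + 1 ≤ E := by omega
        exact_mod_cast hn
      have : η * ((s : ℝ) + k + 1) ≤ η * E := by nlinarith
      have h2s : (2 : ℝ) ≤ (s : ℝ) + 1 := by exact_mod_cast Nat.succ_le_succ hs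
      linarith
    have h3 : η ^ (s + 1) * (((s + 1 + k).choose k : ℕ) : ℝ) * ((s : ℝ) + 1) ≤
        (η * (k + 1)) * ((s : ℝ) + 1) := by
      have heq : η ^ (s + 1) * (((s + 1 + k).choose k : ℕ) : ℝ) * ((s : ℝ) + 1) =
          (η ^ s * (((s + k).choose k : ℕ) : ℝ)) * (η * ((s : ℝ) + k + 1)) := by
        rw [pow_succ]
        linear_combination (η ^ s * η) * hid
      rw [heq]
      exact mul_le_mul ihs hb (by positivity) (by positivity)
    have hpos : (0 : ℝ) < (s : ℝ) + 1 := by positivity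
    exact le_of_mul_le_mul_right h3 hpos

theorem sum_eta_pow_sqrt_choose_abs_entry_le (E : ℕ) (hE : 1 ≤ E)
    (ρ : ℕ → ℕ → ℂ)
    (hpsd : (Matrix.of (fun i j : Fin (E + 1) => ρ i j)).PosSemidef)
    (htr : (Matrix.of (fun i j : Fin (E + 1) => ρ i j)).trace = 1)
    (hsupp : ∀ m n : ℕ, E < m ∨ E < n → ρ m n = 0)
    (k l : ℕ) (hk : k ≤ E) (hl : l ≤ E)
    (η : ℝ) (hη : 0 < η) (hη2 : η ≤ 2 / E) :
    ∑ s ∈ Finset.Icc 1 (E - max k l),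
        η ^ s * Real.sqrt (((s + k).choose k : ℝ) * ((s + l).choose l : ℝ)) *
          ‖ρ (s + k) (s + l)‖ ≤
      η * Real.sqrt (((k : ℝ) + 1) * ((l : ℝ) + 1)) := by
  have hEpos : (0 : ℝ) < E := by exact_mod_cast hE
  have hη2' : η * (E : ℝ) ≤ 2 := by
    rw [le_div_iff₀ hEpos] at hη2
    linarith
  set r : ℕ → ℝ := fun m => (ρ m m).re with hrdef
  have hrnn : ∀ m, 0 ≤ r m := by
    intro m
    by_cases hm : m ≤ E
    · have := psd_diag_nonneg hpsd ⟨m, by omega⟩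
      exact (Complex.le_def.1 this).1
    · simp [hrdef, hsupp m m (Or.inl (by omega))]
  have hentry : ∀ m n : ℕ, m ≤ E → n ≤ E →
      ‖ρ m n‖ ≤ Real.sqrt (r m * r n) := by
    intro m n hm hn
    exact psd_abs_entry_le hpsd ⟨m, by omega⟩ ⟨n, by omega⟩
  have hsum1 : ∑ m ∈ Finset.range (E + 1), r m = 1 := by
    have h1 : ((Matrix.of (fun i j : Fin (E + 1) => ρ i j)).trace).re = 1 := by
      rw [htr]; rfl
    rw [Matrix.trace, Complex.re_sum] at h1
    rw [← h1, ← Fin.sum_univ_eq_sum_range (fun m => r m) (E + 1)]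
    rfl
  set T := max k l with hTdef
  set S := Finset.Icc 1 (E - T) with hSdef
  have hTE : T ≤ E := by omega
  have hmemS : ∀ s ∈ S, 1 ≤ s ∧ s + T ≤ E := by
    intro s hs
    rw [hSdef, Finset.mem_Icc] at hs
    omega
  -- partial sums of r are at most 1
  have hrsum_le : ∀ a : ℕ, a ≤ T → (∑ s ∈ S, r (s + a)) ≤ 1 := by
    intro a haT
    · have himg : ∑ s ∈ S, r (s + a) = ∑ m ∈ S.image (· + a), r m := by
        rw [Finset.sum_image (by intro x _ y _ h; simp only at h; omega)]
      rw [himg, ← hsum1]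
      apply Finset.sum_le_sum_of_subset_of_nonneg
      · intro m hm
        rw [Finset.mem_image] at hm
        obtain ⟨s, hs, rfl⟩ := hm
        obtain ⟨h1, h2⟩ := hmemS s hs
        rw [Finset.mem_range]
        have : s + a ≤ s + T := Nat.add_le_add_left haT s
        omega
      · intro m _ _; exact hrnn m
  set f : ℕ → ℝ := fun s => η ^ s * (((s + k).choose k : ℕ) : ℝ) * r (s + k) with hfdef
  set g : ℕ → ℝ := fun s => η ^ s * (((s + l).choose l : ℕ) : ℝ) * r (s + l) with hgdef
  have hf0 : ∀ s, 0 ≤ f s := fun s => by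
    have := hrnn (s + k); positivity
  have hg0 : ∀ s, 0 ≤ g s := fun s => by
    have := hrnn (s + l); positivity
  have hfsum : ∀ (a : ℕ) (F : ℕ → ℝ), a ≤ T →
      (∀ s, F s = η ^ s * (((s + a).choose a : ℕ) : ℝ) * r (s + a)) →
      ∑ s ∈ S, F s ≤ η * ((a : ℝ) + 1) := by
    intro a F haT hF
    have step1 : ∑ s ∈ S, F s ≤ ∑ s ∈ S, η * ((a : ℝ) + 1) * r (s + a) := by
      apply Finset.sum_le_sum
      intro s hs
      obtain ⟨hs1, hsT⟩ := hmemS s hs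
      rw [hF s]
      have hsa : s + a ≤ E := le_trans (Nat.add_le_add_left haT s) hsT
      exact mul_le_mul_of_nonneg_right
        (eta_pow_choose_le hη hη2' s hs1 hsa) (hrnn _)
    calc ∑ s ∈ S, F s ≤ ∑ s ∈ S, η * ((a : ℝ) + 1) * r (s + a) := step1
      _ = η * ((a : ℝ) + 1) * ∑ s ∈ S, r (s + a) := by rw [← Finset.mul_sum]
      _ ≤ η * ((a : ℝ) + 1) * 1 := by
          apply mul_le_mul_of_nonneg_left (hrsum_le a haT) (by positivity)
      _ = η * ((a : ℝ) + 1) := by ring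
  have hfs : ∑ s ∈ S, f s ≤ η * ((k : ℝ) + 1) := hfsum k f (by omega) (fun s => rfl)
  have hgs : ∑ s ∈ S, g s ≤ η * ((l : ℝ) + 1) := hfsum l g (by omega) (fun s => rfl)
  -- termwise bound
  have hterm : ∀ s ∈ S,
      η ^ s * Real.sqrt (((s + k).choose k : ℝ) * ((s + l).choose l : ℝ)) *
        ‖ρ (s + k) (s + l)‖ ≤ Real.sqrt (f s) * Real.sqrt (g s) := by
    intro s hs
    obtain ⟨hs1, hsT⟩ := hmemS s hs
    have hske : s + k ≤ E := by omega
    have hsle : s + l ≤ E := by omega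
    have habs := hentry (s + k) (s + l) hske hsle
    have hrr : 0 ≤ r (s + k) * r (s + l) := mul_nonneg (hrnn _) (hrnn _)
    have hCC : (0 : ℝ) ≤ ((s + k).choose k : ℝ) * ((s + l).choose l : ℝ) := by positivity
    have key : Real.sqrt (f s) * Real.sqrt (g s)
        = η ^ s * Real.sqrt (((s + k).choose k : ℝ) * ((s + l).choose l : ℝ)) *
          Real.sqrt (r (s + k) * r (s + l)) := by
      rw [← Real.sqrt_mul (hf0 s)]
      have hexp : f s * g s =
          (η ^ s * Real.sqrt (((s + k).choose k : ℝ) * ((s + l).choose l : ℝ)) *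
            Real.sqrt (r (s + k) * r (s + l))) ^ 2 := by
        have e1 : Real.sqrt (((s + k).choose k : ℝ) * ((s + l).choose l : ℝ)) ^ 2
            = ((s + k).choose k : ℝ) * ((s + l).choose l : ℝ) := Real.sq_sqrt hCC
        have e2 : Real.sqrt (r (s + k) * r (s + l)) ^ 2 = r (s + k) * r (s + l) :=
          Real.sq_sqrt hrr
        calc f s * g s = (η ^ s) ^ 2 * ((((s + k).choose k : ℕ) : ℝ) * (((s + l).choose l : ℕ) : ℝ))
              * (r (s + k) * r (s + l)) := by simp only [hfdef, hgdef]; ring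
          _ = _ := by rw [mul_pow, mul_pow, e1, e2]
      rw [hexp, Real.sqrt_sq (by positivity)]
    rw [key]
    exact mul_le_mul_of_nonneg_left habs (by positivity)
  calc ∑ s ∈ S, η ^ s * Real.sqrt (((s + k).choose k : ℝ) * ((s + l).choose l : ℝ)) *
          ‖ρ (s + k) (s + l)‖
      ≤ ∑ s ∈ S, Real.sqrt (f s) * Real.sqrt (g s) := Finset.sum_le_sum hterm
    _ ≤ Real.sqrt (∑ s ∈ S, f s) * Real.sqrt (∑ s ∈ S, g s) :=
        Real.sum_sqrt_mul_sqrt_le S hf0 hg0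
    _ ≤ Real.sqrt (η * ((k : ℝ) + 1)) * Real.sqrt (η * ((l : ℝ) + 1)) := by
        apply mul_le_mul (Real.sqrt_le_sqrt hfs) (Real.sqrt_le_sqrt hgs)
          (Real.sqrt_nonneg _) (Real.sqrt_nonneg _)
    _ = η * Real.sqrt (((k : ℝ) + 1) * ((l : ℝ) + 1)) := by
        rw [← Real.sqrt_mul (by positivity),
          show η * ((k : ℝ) + 1) * (η * ((l : ℝ) + 1)) = η ^ 2 * (((k : ℝ) + 1) * ((l : ℝ) + 1))
            by ring,
          Real.sqrt_mul (sq_nonneg η), Real.sqrt_sq hη.le]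
end

section
/- For natural numbers r ≤ n with n ≥ 1, 2·C(n,r)·((r+1)/(n+1))^{r+1}·(1−(r+1)/(n+1))^{n−r} ≤ (√(r+1)/n)·exp((r+1)²/(n+1)). -/
open Real Stirling

lemma my_sqrt_pi_le_stirlingSeq (n : ℕ) : Real.sqrt Real.pi ≤ stirlingSeq (n + 1) := by
  have ha : Antitone (stirlingSeq ∘ Nat.succ) := stirlingSeq'_antitone
  have ht : Filter.Tendsto (stirlingSeq ∘ Nat.succ) Filter.atTop (nhds (Real.sqrt Real.pi)) :=
    tendsto_stirlingSeq_sqrt_pi.comp (Filter.tendsto_add_atTop_nat 1)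
  exact ha.le_of_tendsto ht n

lemma my_fact_lower (r : ℕ) :
    Real.sqrt Real.pi * (Real.sqrt (2 * (r + 1)) * (((r : ℝ) + 1) / Real.exp 1) ^ (r + 1))
      ≤ ((r + 1).factorial : ℝ) := by
  have h := my_sqrt_pi_le_stirlingSeq r
  rw [stirlingSeq, le_div_iff₀ (by positivity)] at h
  convert h using 3 <;> push_cast <;> rfl

lemma my_keyB (r : ℕ) :
    2 * ((r : ℝ) + 1) ^ (r + 1) * Real.exp (-((r : ℝ) + 1)) ≤
      Real.sqrt ((r : ℝ) + 1) * (r.factorial : ℝ) := by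
  set x : ℝ := (r : ℝ) + 1 with hx
  have hx0 : (0 : ℝ) < x := by positivity
  have hD : (x / Real.exp 1) ^ (r + 1) = x ^ (r + 1) * Real.exp (-x) := by
    have he : Real.exp 1 ^ (r + 1) = Real.exp x := by
      rw [← Real.exp_nat_mul]
      congr 1
      push_cast [hx]
      ring
    rw [div_pow, he, Real.exp_neg, div_eq_mul_inv]
  have h2 : (2 : ℝ) ≤ Real.sqrt Real.pi * Real.sqrt 2 := by
    rw [← Real.sqrt_mul Real.pi_pos.le]
    have h4 : (4 : ℝ) ≤ Real.pi * 2 := by nlinarith [Real.pi_gt_three]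
    calc (2 : ℝ) = Real.sqrt 4 := by
          rw [show (4 : ℝ) = 2 ^ 2 by norm_num, Real.sqrt_sq (by norm_num : (0:ℝ) ≤ 2)]
      _ ≤ _ := Real.sqrt_le_sqrt h4
  have hf := my_fact_lower r
  have hsplit : Real.sqrt (2 * x) = Real.sqrt 2 * Real.sqrt x := Real.sqrt_mul (by norm_num) x
  have hxx : Real.sqrt x * Real.sqrt x = x := Real.mul_self_sqrt hx0.le
  have hfact : ((r + 1).factorial : ℝ) = x * r.factorial := by
    push_cast [Nat.factorial_succ, hx]
    ring
  have hD0 : (0 : ℝ) ≤ x ^ (r + 1) * Real.exp (-x) := by positivity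
  have hle : 2 * x * (x ^ (r + 1) * Real.exp (-x)) ≤ Real.sqrt x * ((r + 1).factorial : ℝ) := by
    calc 2 * x * (x ^ (r + 1) * Real.exp (-x))
        ≤ Real.sqrt Real.pi * Real.sqrt 2 * x * (x ^ (r + 1) * Real.exp (-x)) := by
          exact mul_le_mul_of_nonneg_right (mul_le_mul_of_nonneg_right h2 hx0.le) hD0
      _ = Real.sqrt x *
          (Real.sqrt Real.pi * (Real.sqrt (2 * x) * (x / Real.exp 1) ^ (r + 1))) := by
          rw [hsplit, hD]
          linear_combination
            (-(Real.sqrt Real.pi * Real.sqrt 2 * (x ^ (r + 1) * Real.exp (-x)))) * hxx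
      _ ≤ Real.sqrt x * ((r + 1).factorial : ℝ) := by
          have hsx : Real.sqrt Real.pi * (Real.sqrt (2 * x) * (x / Real.exp 1) ^ (r + 1))
              ≤ ((r + 1).factorial : ℝ) := by
            rw [hx]; exact hf
          exact mul_le_mul_of_nonneg_left hsx (Real.sqrt_nonneg x)
  rw [hfact] at hle
  have h' : x * (2 * x ^ (r + 1) * Real.exp (-x)) ≤ x * (Real.sqrt x * r.factorial) := by
    calc x * (2 * x ^ (r + 1) * Real.exp (-x)) = 2 * x * (x ^ (r + 1) * Real.exp (-x)) := by ring
      _ ≤ Real.sqrt x * (x * r.factorial) := hle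
      _ = x * (Real.sqrt x * r.factorial) := by ring
  exact le_of_mul_le_mul_left h' hx0

theorem two_choose_mul_max_le (n r : ℕ) (h : r ≤ n) (hn : 1 ≤ n) :
    2 * (n.choose r : ℝ) * (((r : ℝ) + 1) / ((n : ℝ) + 1)) ^ (r + 1) *
        (1 - ((r : ℝ) + 1) / ((n : ℝ) + 1)) ^ (n - r) ≤
      Real.sqrt ((r : ℝ) + 1) / (n : ℝ) *
        Real.exp (((r : ℝ) + 1) ^ 2 / ((n : ℝ) + 1)) := by
  set x : ℝ := (r : ℝ) + 1 with hxdef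
  set m : ℝ := (n : ℝ) + 1 with hmdef
  have hx0 : (0 : ℝ) < x := by positivity
  have hm0 : (0 : ℝ) < m := by positivity
  have hn0 : (0 : ℝ) < n := by exact_mod_cast hn
  have hxm : x ≤ m := by
    have : (r : ℝ) ≤ n := by exact_mod_cast h
    simp only [hxdef, hmdef]; linarith
  have hp1 : x / m ≤ 1 := (div_le_one hm0).mpr hxm
  have h1p : (0 : ℝ) ≤ 1 - x / m := by linarith
  -- bound on (1 - p)^(n - r)
  have e1 : 1 - x / m ≤ Real.exp (-(x / m)) := by
    have := Real.add_one_le_exp (-(x / m)); linarith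
  have e2 : (1 - x / m) ^ (n - r) ≤ Real.exp (-(x / m)) ^ (n - r) :=
    pow_le_pow_left₀ h1p e1 _
  have e3 : Real.exp (-(x / m)) ^ (n - r) = Real.exp (((n - r : ℕ) : ℝ) * (-(x / m))) :=
    (Real.exp_nat_mul _ _).symm
  have e4 : ((n - r : ℕ) : ℝ) * (-(x / m)) = -x + x ^ 2 / m := by
    rw [Nat.cast_sub h]
    field_simp [hxdef, hmdef]
    ring
  have hE : (1 - x / m) ^ (n - r) ≤ Real.exp (-x) * Real.exp (x ^ 2 / m) := by
    rw [← Real.exp_add]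
    calc (1 - x / m) ^ (n - r) ≤ Real.exp (-(x / m)) ^ (n - r) := e2
      _ = Real.exp (-x + x ^ 2 / m) := by rw [e3, e4]
  -- choose bound
  have hC : (n.choose r : ℝ) ≤ (n : ℝ) ^ r / (r.factorial : ℝ) := by
    have := Nat.choose_le_pow_div (α := ℝ) r n
    simpa using this
  have hrf : (0 : ℝ) < (r.factorial : ℝ) := by positivity
  -- key scalar inequality
  have key : 2 * ((n : ℝ) ^ r / (r.factorial : ℝ)) * (x ^ (r + 1) / m ^ (r + 1)) *
      Real.exp (-x) ≤ Real.sqrt x / n := by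
    have h1 : (n : ℝ) ^ (r + 1) ≤ m ^ (r + 1) := by
      apply pow_le_pow_left₀ hn0.le
      simp only [hmdef]; linarith
    have h2 := my_keyB r
    have hprod : 2 * x ^ (r + 1) * Real.exp (-x) * (n : ℝ) ^ (r + 1) ≤
        Real.sqrt x * (r.factorial : ℝ) * m ^ (r + 1) :=
      mul_le_mul h2 h1 (by positivity) (by positivity)
    rw [show 2 * ((n : ℝ) ^ r / (r.factorial : ℝ)) * (x ^ (r + 1) / m ^ (r + 1)) *
        Real.exp (-x) = 2 * x ^ (r + 1) * Real.exp (-x) * (n : ℝ) ^ (r + 1) /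
        ((r.factorial : ℝ) * m ^ (r + 1) * n) from by
      field_simp
      ring]
    rw [div_le_div_iff₀ (by positivity) hn0]
    nlinarith [mul_le_mul_of_nonneg_right hprod hn0.le]
  calc 2 * (n.choose r : ℝ) * (x / m) ^ (r + 1) * (1 - x / m) ^ (n - r)
      ≤ 2 * ((n : ℝ) ^ r / (r.factorial : ℝ)) * (x / m) ^ (r + 1) *
        (Real.exp (-x) * Real.exp (x ^ 2 / m)) := by
        gcongr <;> first
          | exact hC
          | exact hE
          | exact pow_nonneg h1p _
          | positivity
    _ = 2 * ((n : ℝ) ^ r / (r.factorial : ℝ)) * (x ^ (r + 1) / m ^ (r + 1)) *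
        Real.exp (-x) * Real.exp (x ^ 2 / m) := by rw [div_pow]; ring
    _ ≤ Real.sqrt x / n * Real.exp (x ^ 2 / m) :=
        mul_le_mul_of_nonneg_right key (Real.exp_pos _).le
end
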